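/- arXiv:1302.4599 — 2 statements merged into one kernel-verified Lean document; each statement's English description precedes it below -/
import Mathlib

section
/- Let E ⊆ [0,∞) and τ̃ ∈ Ẽ₀ᵈ. Then E is τ̃-strongly porous at 0 if and only if C(τ̃) < ∞; and E is completely strongly porous at 0 if and only if C_E < ∞. -/
open Filter Topology Set
open scoped ENNReal

/-- A scaling sequence: strictly positive reals tending to zero. -/
def IsScaling (r : ℕ → ℝ) : Prop := (∀ n, 0 < r n) ∧ Tendsto r atTop (𝓝 0)

/-- A sequence of reals is almost decreasing if it is eventually nonincreasing. -/
def AlmostDecreasing (t : ℕ → ℝ) : Prop := ∀ᶠ n in atTop, t (n + 1) ≤ t n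

/-- `τ ∈ Ẽ₀ᵈ`: almost decreasing, values in `E \ {0}`, tending to `0`. -/
def MemE0d (E : Set ℝ) (t : ℕ → ℝ) : Prop :=
  AlmostDecreasing t ∧ (∀ n, t n ∈ E \ {0}) ∧ Tendsto t atTop (𝓝 0)

/-- `(a,b)` is a connected component of `Int(ℝ⁺ \ E)`: an open interval in `ℝ⁺`
missing `E` that is maximal (among such intervals) with this property. -/
def IsGapComponent (E : Set ℝ) (a b : ℝ) : Prop :=
  0 ≤ a ∧ a < b ∧ Ioo a b ∩ E = ∅ ∧
    ∀ a' b' : ℝ, 0 ≤ a' → a' ≤ a → b ≤ b' → Ioo a' b' ∩ E = ∅ → a' = a ∧ b' = b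

/-- `((aₙ,bₙ))ₙ ∈ Ĩ_Eᵈ`. -/
def MemIE (E : Set ℝ) (a b : ℕ → ℝ) : Prop :=
  (∀ n, IsGapComponent E (a n) (b n)) ∧ AlmostDecreasing a ∧
    Tendsto a atTop (𝓝 0) ∧ Tendsto (fun n => (b n - a n) / b n) atTop (𝓝 1)

/-- `x̃ ≍ ỹ`: there are `c₁, c₂ > 0` with `c₁ xₙ < yₙ < c₂ xₙ` for all `n`. -/
def Asymp (x y : ℕ → ℝ) : Prop :=
  ∃ c₁ c₂ : ℝ, 0 < c₁ ∧ 0 < c₂ ∧ ∀ n, c₁ * x n < y n ∧ y n < c₂ * x n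

/-- `E` is `τ̃`-strongly porous at `0`. -/
def TauStronglyPorous (E : Set ℝ) (t : ℕ → ℝ) : Prop :=
  ∃ a b : ℕ → ℝ, MemIE E a b ∧ Asymp t a

/-- `E` is completely strongly porous at `0`. -/
def CSP (E : Set ℝ) : Prop := ∀ t : ℕ → ℝ, MemE0d E t → TauStronglyPorous E t

/-- `L̃ = ((lₙ,mₙ)) ∈ Ĩ_Eᵈ` is universal. -/
def IsUniversal (E : Set ℝ) (l m : ℕ → ℝ) : Prop :=
  MemIE E l m ∧ ∀ a b : ℕ → ℝ, MemIE E a b →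
    ∃ (N₁ : ℕ) (f : ℕ → ℕ), ∀ n, N₁ ≤ n → a n = l (f n)

/-- `M(L̃) = limsupₙ lₙ/mₙ₊₁`, as an element of `[0,∞]`. -/
noncomputable def Mlim (l m : ℕ → ℝ) : ℝ≥0∞ :=
  limsup (fun n => ENNReal.ofReal (l n / m (n + 1))) atTop

/-- `C(τ̃) = inf{ limsupₙ aₙ/τₙ : ((aₙ,bₙ)) ∈ Ĩ_Eᵈ(τ̃) }` (inf ∅ = ∞). -/
noncomputable def Ctau (E : Set ℝ) (t : ℕ → ℝ) : ℝ≥0∞ :=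
  sInf {c : ℝ≥0∞ | ∃ a b : ℕ → ℝ, MemIE E a b ∧ (∀ᶠ n in atTop, t n ≤ a n) ∧
    c = limsup (fun n => ENNReal.ofReal (a n / t n)) atTop}

/-- `C_E = sup_{τ̃ ∈ Ẽ₀ᵈ} C(τ̃)`. -/
noncomputable def Ctot (E : Set ℝ) : ℝ≥0∞ :=
  ⨆ t ∈ {t : ℕ → ℝ | MemE0d E t}, Ctau E t

/-- A normal scaling sequence for the pointed metric space `(E, |·|, 0)`. -/
def IsNormalE (E : Set ℝ) (r : ℕ → ℝ) : Prop :=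
  IsScaling r ∧ ∃ s : ℕ → ℝ, (∀ n, s n ∈ E) ∧ AlmostDecreasing s ∧
    Tendsto (fun n => s n / r n) atTop (𝓝 1)

/-- `R*(Ω₀ᴱ(n))`: the sup of all limits `limₙ sₙ/rₙ` over normal scaling sequences `r`
for `(E,|·|,0)` and sequences `s` in `E` for which the finite limit exists (sup ∅ = 0). -/
noncomputable def RstarE (E : Set ℝ) : ℝ≥0∞ :=
  sSup {c : ℝ≥0∞ | ∃ (r s : ℕ → ℝ) (L : ℝ), IsNormalE E r ∧ (∀ n, s n ∈ E) ∧
    Tendsto (fun n => s n / r n) atTop (𝓝 L) ∧ c = ENNReal.ofReal L}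

/-- `x̃` and `ỹ` are mutually stable w.r.t. `r̃`. -/
def MutuallyStable {X : Type*} [MetricSpace X] (r : ℕ → ℝ) (x y : ℕ → X) : Prop :=
  ∃ L : ℝ, Tendsto (fun n => dist (x n) (y n) / r n) atTop (𝓝 L)

/-- A family of sequences is self-stable w.r.t. `r̃`. -/
def SelfStable {X : Type*} [MetricSpace X] (r : ℕ → ℝ) (F : Set (ℕ → X)) : Prop :=
  ∀ x ∈ F, ∀ y ∈ F, MutuallyStable r x y

/-- A maximal self-stable family w.r.t. `r̃`. -/
def MaximalSelfStable {X : Type*} [MetricSpace X] (r : ℕ → ℝ) (F : Set (ℕ → X)) : Prop :=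
  SelfStable r F ∧ ∀ z : ℕ → X, z ∈ F ∨ ∃ x ∈ F, ¬ MutuallyStable r x z

/-- A normal scaling sequence for the pointed metric space `(X,d,p)`. -/
def IsNormalX {X : Type*} [MetricSpace X] (p : X) (r : ℕ → ℝ) : Prop :=
  IsScaling r ∧ ∃ x : ℕ → X, AlmostDecreasing (fun n => dist (x n) p) ∧
    Tendsto (fun n => dist (x n) p / r n) atTop (𝓝 1)

/-- `R*(Ω_pˣ(n))`: the sup of all limits `limₙ d(xₙ,p)/rₙ` over normal scaling
sequences `r̃` and sequences `x̃` in `X` for which the finite limit exists (sup ∅ = 0). -/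
noncomputable def RstarX {X : Type*} [MetricSpace X] (p : X) : ℝ≥0∞ :=
  sSup {c : ℝ≥0∞ | ∃ (r : ℕ → ℝ) (x : ℕ → X) (L : ℝ), IsNormalX p r ∧
    Tendsto (fun n => dist (x n) p / r n) atTop (𝓝 L) ∧ c = ENNReal.ofReal L}

/-- `R₊(Ω_pˣ(n))`: the inf of the strictly positive such limits (inf ∅ = ∞). -/
noncomputable def RlowX {X : Type*} [MetricSpace X] (p : X) : ℝ≥0∞ :=
  sInf {c : ℝ≥0∞ | ∃ (r : ℕ → ℝ) (x : ℕ → X) (L : ℝ), IsNormalX p r ∧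
    Tendsto (fun n => dist (x n) p / r n) atTop (𝓝 L) ∧ 0 < L ∧ c = ENNReal.ofReal L}

lemma memE0d_pos {E : Set ℝ} (hE : E ⊆ Ici 0) {t : ℕ → ℝ} (ht : MemE0d E t) :
    ∀ n, 0 < t n := fun n =>
  lt_of_le_of_ne (hE (ht.2.1 n).1) (fun h => (ht.2.1 n).2 (by simp [← h]))

lemma gap_disjoint {E : Set ℝ} {a b a' b' : ℝ} (h1 : IsGapComponent E a b)
    (h2 : IsGapComponent E a' b') (haa : a < a') (hab : a' < b) : False := by
  obtain ⟨ha0, hab1, hE1, hmax1⟩ := h1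
  obtain ⟨ha0', hab1', hE2, hmax2⟩ := h2
  have hempty : Ioo a (max b b') ∩ E = ∅ := by
    ext x
    simp only [Set.mem_inter_iff, Set.mem_Ioo, Set.mem_empty_iff_false, iff_false, not_and]
    rintro ⟨hx1, hx2⟩ hxE
    rcases lt_or_ge x b with h | h
    · have : x ∈ Ioo a b ∩ E := ⟨⟨hx1, h⟩, hxE⟩
      rw [hE1] at this; exact this
    · have hxb' : x < b' := by
        rcases max_cases b b' with ⟨he, _⟩ | ⟨he, _⟩
        · rw [he] at hx2; linarith
        · rw [he] at hx2; exact hx2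
      have : x ∈ Ioo a' b' ∩ E := ⟨⟨lt_of_lt_of_le hab h, hxb'⟩, hxE⟩
      rw [hE2] at this; exact this
  have hb := hmax1 a (max b b') ha0 le_rfl (le_max_left _ _) hempty
  have hb'b : b' ≤ b := max_eq_left_iff.mp hb.2
  have := hmax2 a b ha0 haa.le hb'b hE1
  linarith [this.1]

lemma asymp_of_eventually {x y : ℕ → ℝ} (hx : ∀ n, 0 < x n) (hy : ∀ n, 0 < y n)
    {c₁ c₂ : ℝ} (h₁ : 0 < c₁) (h₂ : 0 < c₂)
    (h : ∀ᶠ n in atTop, c₁ * x n < y n ∧ y n < c₂ * x n) : Asymp x y := by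
  obtain ⟨N, hN⟩ := eventually_atTop.mp h
  have hne : (Finset.range (N + 1)).Nonempty := ⟨0, by simp⟩
  set r : ℕ → ℝ := fun n => y n / x n with hr
  have hrpos : ∀ n, 0 < r n := fun n => div_pos (hy n) (hx n)
  set d₁ : ℝ := min c₁ ((Finset.range (N + 1)).inf' hne r / 2) with hd₁
  set d₂ : ℝ := max c₂ ((Finset.range (N + 1)).sup' hne r * 2) with hd₂
  have hinfpos : 0 < (Finset.range (N + 1)).inf' hne r := by
    rw [Finset.lt_inf'_iff]; exact fun i _ => hrpos i
  refine ⟨d₁, d₂, lt_min h₁ (by linarith), lt_of_lt_of_le h₂ (le_max_left _ _), fun n => ?_⟩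
  rcases le_or_gt n N with hn | hn
  · have hmem : n ∈ Finset.range (N + 1) := Finset.mem_range.mpr (by omega)
    have hi : (Finset.range (N + 1)).inf' hne r ≤ r n := Finset.inf'_le r hmem
    have hs : r n ≤ (Finset.range (N + 1)).sup' hne r := Finset.le_sup' r hmem
    constructor
    · have : d₁ < r n := lt_of_le_of_lt (min_le_right _ _) (by linarith)
      exact (lt_div_iff₀ (hx n)).mp this
    · have : r n < d₂ := lt_of_lt_of_le (by nlinarith [hrpos n]) (le_max_right _ _)
      exact (div_lt_iff₀ (hx n)).mp this
  · have h := hN n (by omega)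
    constructor
    · calc d₁ * x n ≤ c₁ * x n := by
            apply mul_le_mul_of_nonneg_right (min_le_left _ _) (hx n).le
        _ < y n := h.1
    · calc y n < c₂ * x n := h.2
        _ ≤ d₂ * x n := mul_le_mul_of_nonneg_right (le_max_left _ _) (hx n).le

lemma exists_sorted (g : ℕ → ℝ) (hg0 : ∀ i, 0 < g i)
    (hfin : ∀ ε : ℝ, 0 < ε → {i | ε ≤ g i}.Finite) :
    ∃ π : ℕ → ℕ, Function.Injective π ∧ Function.Surjective π ∧
      ∀ m, g (π (m + 1)) ≤ g (π m) := by
  have key : ∀ S : Finset ℕ, ∃ i, i ∉ S ∧ ∀ j, j ∉ S → g j ≤ g i := by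
    intro S
    obtain ⟨j₀, hj₀⟩ : ∃ j₀, j₀ ∉ S := by
      refine ⟨S.sup id + 1, fun h => ?_⟩
      have := Finset.le_sup (f := id) h
      simp only [id] at this; omega
    have hA : {j | j ∉ S ∧ g j₀ ≤ g j}.Finite :=
      (hfin (g j₀) (hg0 j₀)).subset (fun j hj => hj.2)
    obtain ⟨i, hiA, hmax⟩ := hA.toFinset.exists_max_image g
      ⟨j₀, hA.mem_toFinset.mpr ⟨hj₀, le_rfl⟩⟩
    rw [hA.mem_toFinset] at hiA
    refine ⟨i, hiA.1, fun j hj => ?_⟩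
    by_cases hge : g j₀ ≤ g j
    · exact hmax j (hA.mem_toFinset.mpr ⟨hj, hge⟩)
    · have := hmax j₀ (hA.mem_toFinset.mpr ⟨hj₀, le_rfl⟩)
      linarith [not_le.mp hge]
  choose pick hpick1 hpick2 using key
  let S : ℕ → Finset ℕ := fun m => Nat.rec ∅ (fun _ T => insert (pick T) T) m
  set π : ℕ → ℕ := fun m => pick (S m) with hπ
  have hS : ∀ m, S (m + 1) = insert (π m) (S m) := fun m => rfl
  have hSle : ∀ {m m'}, m ≤ m' → S m ⊆ S m' := by
    intro m m' h
    induction m' with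
    | zero =>
      have : m = 0 := by omega
      rw [this]
    | succ k ih =>
      rcases Nat.lt_or_ge m (k+1) with hlt | hge
      · have : S m ⊆ S k := ih (by omega)
        rw [hS k]
        exact this.trans (Finset.subset_insert _ _)
      · have : m = k + 1 := by omega
        rw [this]
  have hnot : ∀ m, π m ∉ S m := fun m => hpick1 (S m)
  have hmem : ∀ {m m'}, m < m' → π m ∈ S m' := by
    intro m m' h
    exact hSle h (by rw [hS m]; exact Finset.mem_insert_self _ _)
  have hinj : Function.Injective π := by
    intro m m' h
    rcases lt_trichotomy m m' with hlt | he | hlt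
    · exact absurd (h ▸ hmem hlt) (hnot m')
    · exact he
    · exact absurd (hmem hlt) (h ▸ hnot m)
  refine ⟨π, hinj, ?_, fun m => ?_⟩
  · intro i
    by_contra hi
    push_neg at hi
    have hiS : ∀ m, i ∉ S m := by
      intro m
      induction m with
      | zero => simp [S]
      | succ m ih =>
        rw [hS m, Finset.mem_insert]
        rintro (h | h)
        · exact hi m h.symm
        · exact ih h
    have hge : ∀ m, g i ≤ g (π m) := fun m => hpick2 (S m) i (hiS m)
    have hsub : Set.range π ⊆ {j | g i ≤ g j} := by
      rintro _ ⟨m, rfl⟩; exact hge m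
    exact (Set.infinite_range_of_injective hinj) ((hfin (g i) (hg0 i)).subset hsub)
  · have h1 : π (m + 1) ∉ S m := fun h => hnot (m + 1) (hSle (Nat.le_succ m) h)
    exact hpick2 (S m) (π (m + 1)) h1

lemma lemA (E : Set ℝ) (hE : E ⊆ Ici 0) (t : ℕ → ℝ) (ht : MemE0d E t)
    (α β : ℕ → ℝ) (hgap : ∀ n, IsGapComponent E (α n) (β n))
    (c₁ c₂ : ℝ) (hc₁ : 0 < c₁) (hc₂ : 0 < c₂)
    (hb : ∀ᶠ n in atTop, c₁ * t n < α n ∧ α n < c₂ * t n)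
    (hrat : Tendsto (fun n => (β n - α n) / β n) atTop (𝓝 1)) :
    Ctau E t ≤ ENNReal.ofReal c₂ := by
  have ht0 : ∀ n, 0 < t n := memE0d_pos hE ht
  have hβpos : ∀ n, 0 < β n := fun n => lt_of_le_of_lt (hgap n).1 (hgap n).2.1
  have hαβ : Tendsto (fun n => α n / β n) atTop (𝓝 0) := by
    have h := (tendsto_const_nhds (x := (1:ℝ)) (f := atTop)).sub hrat
    norm_num at h
    refine h.congr (fun n => ?_)
    have hβ := (hβpos n).ne'
    field_simp
    ring
  have hev1 : ∀ᶠ n in atTop, α n / β n < c₁ := hαβ.eventually_lt_const hc₁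
  have hev2 : ∀ᶠ n in atTop, α n / β n < c₁ / c₂ := hαβ.eventually_lt_const (by positivity)
  -- eventually t n ≤ α n
  have hta : ∀ᶠ n in atTop, t n ≤ α n := by
    filter_upwards [hb, hev1] with n hn h1
    have hα0 : 0 < α n := lt_trans (mul_pos hc₁ (ht0 n)) hn.1
    have h2 : α n < c₁ * β n := by
      rw [div_lt_iff₀ (hβpos n)] at h1; linarith
    have htβ : t n < β n := by
      have := lt_trans hn.1 h2
      exact (mul_lt_mul_iff_right₀ hc₁).mp this
    by_contra hlt
    push_neg at hlt
    have hmem : t n ∈ Ioo (α n) (β n) ∩ E := ⟨⟨hlt, htβ⟩, (ht.2.1 n).1⟩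
    rw [(hgap n).2.2.1] at hmem
    exact hmem
  -- almost decreasing
  have had : ∀ᶠ n in atTop, α (n + 1) ≤ α n := by
    obtain ⟨N1, h1⟩ := eventually_atTop.mp hb
    obtain ⟨N2, h2⟩ := eventually_atTop.mp ht.1
    obtain ⟨N3, h3⟩ := eventually_atTop.mp hev2
    refine eventually_atTop.mpr ⟨max (max N1 N2) N3, fun n hn => ?_⟩
    have hn1 : N1 ≤ n := le_trans (le_max_left _ _) (le_trans (le_max_left _ _) hn)
    have hn2 : N2 ≤ n := le_trans (le_max_right _ _) (le_trans (le_max_left _ _) hn)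
    have hn3 : N3 ≤ n := le_trans (le_max_right _ _) hn
    by_contra hgt
    push_neg at hgt
    have hβα : β n ≤ α (n + 1) := by
      by_contra hh
      push_neg at hh
      exact gap_disjoint (hgap n) (hgap (n + 1)) hgt hh
    have e1 : α (n + 1) < c₂ * t (n + 1) := (h1 (n + 1) (by omega)).2
    have e2 : t (n + 1) ≤ t n := h2 n hn2
    have e3 : c₁ * t n < α n := (h1 n hn1).1
    have e4 : α n < c₁ / c₂ * β n := by
      have := h3 n hn3
      rw [div_lt_iff₀ (hβpos n)] at this; linarith
    have key : c₂ * t n < β n := by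
      have k1 : c₂ * α n < c₁ * β n := by
        have := mul_lt_mul_of_pos_left e4 hc₂
        calc c₂ * α n < c₂ * (c₁ / c₂ * β n) := this
          _ = c₁ * β n := by field_simp
      nlinarith
    have e2' : c₂ * t (n + 1) ≤ c₂ * t n := mul_le_mul_of_nonneg_left e2 hc₂.le
    linarith
  obtain ⟨N, hN⟩ := eventually_atTop.mp (hta.and (had.and hb))
  set A : ℕ → ℝ := fun n => α (max n N) with hA
  set B : ℕ → ℝ := fun n => β (max n N) with hB
  have hAeq : A =ᶠ[atTop] α := by
    refine eventually_atTop.mpr ⟨N, fun n hn => ?_⟩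
    simp [hA, max_eq_left hn]
  have hα0 : Tendsto α atTop (𝓝 0) := by
    have hct : Tendsto (fun n => c₂ * t n) atTop (𝓝 0) := by
      simpa using ht.2.2.const_mul c₂
    refine squeeze_zero' ?_ ?_ hct
    · filter_upwards [hb] with n hn
      exact le_of_lt (lt_trans (mul_pos hc₁ (ht0 n)) hn.1)
    · filter_upwards [hb] with n hn
      exact hn.2.le
  have hMemIE : MemIE E A B := by
    refine ⟨fun n => hgap _, ?_, ?_, ?_⟩
    · refine eventually_atTop.mpr ⟨N, fun n hn => ?_⟩
      simp only [hA, max_eq_left hn, max_eq_left (le_trans hn (Nat.le_succ n))]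
      exact (hN n hn).2.1
    · exact hα0.congr' hAeq.symm
    · refine hrat.congr' ?_
      refine eventually_atTop.mpr ⟨N, fun n hn => ?_⟩
      simp [hA, hB, max_eq_left hn]
  have hevA : ∀ᶠ n in atTop, t n ≤ A n := by
    refine eventually_atTop.mpr ⟨N, fun n hn => ?_⟩
    simp only [hA, max_eq_left hn]
    exact (hN n hn).1
  have hevA2 : ∀ᶠ n in atTop, ENNReal.ofReal (A n / t n) ≤ ENNReal.ofReal c₂ := by
    refine eventually_atTop.mpr ⟨N, fun n hn => ?_⟩
    apply ENNReal.ofReal_le_ofReal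
    simp only [hA, max_eq_left hn]
    rw [div_le_iff₀ (ht0 n)]
    exact (hN n hn).2.2.2.le
  calc Ctau E t ≤ limsup (fun n => ENNReal.ofReal (A n / t n)) atTop :=
        sInf_le ⟨A, B, hMemIE, hevA, rfl⟩
    _ ≤ ENNReal.ofReal c₂ := limsup_le_of_le (by isBoundedDefault) hevA2

lemma lemB (E : Set ℝ) (hE : E ⊆ Ici 0) (t : ℕ → ℝ) (ht : MemE0d E t)
    (h : Ctau E t < ⊤) : TauStronglyPorous E t := by
  have ht0 : ∀ n, 0 < t n := memE0d_pos hE ht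
  obtain ⟨c, hcS, hclt⟩ := sInf_lt_iff.mp h
  obtain ⟨a, b, hmem, hev, rfl⟩ := hcS
  set L := limsup (fun n => ENNReal.ofReal (a n / t n)) atTop with hL
  have hLtop : L + 1 ≠ ⊤ := ENNReal.add_ne_top.mpr ⟨hclt.ne, ENNReal.one_ne_top⟩
  have hL1 : L < L + 1 := ENNReal.lt_add_right hclt.ne one_ne_zero
  have hev2 : ∀ᶠ n in atTop, ENNReal.ofReal (a n / t n) < L + 1 :=
    eventually_lt_of_limsup_lt hL1
  set r : ℝ := (L + 1).toReal with hr
  have hbound : ∀ᶠ n in atTop, t n ≤ a n ∧ a n < (r + 1) * t n := by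
    filter_upwards [hev, hev2] with n h1 h2
    refine ⟨h1, ?_⟩
    have hdiv : a n / t n < r := by
      by_contra hcon
      push_neg at hcon
      have : L + 1 ≤ ENNReal.ofReal (a n / t n) := by
        rw [← ENNReal.ofReal_toReal hLtop]
        exact ENNReal.ofReal_le_ofReal hcon
      exact absurd h2 (not_lt.mpr this)
    rw [div_lt_iff₀ (ht0 n)] at hdiv
    nlinarith [ht0 n]
  have hr1 : 0 < r + 1 := by
    have : (0:ℝ) ≤ r := ENNReal.toReal_nonneg
    linarith
  obtain ⟨N, hN⟩ := eventually_atTop.mp (hbound.and hmem.2.1)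
  set A : ℕ → ℝ := fun n => a (max n N) with hA
  set B : ℕ → ℝ := fun n => b (max n N) with hB
  have hAeq : A =ᶠ[atTop] a := by
    refine eventually_atTop.mpr ⟨N, fun n hn => ?_⟩
    simp [hA, max_eq_left hn]
  have hMemIE : MemIE E A B := by
    refine ⟨fun n => hmem.1 _, ?_, hmem.2.2.1.congr' hAeq.symm, ?_⟩
    · refine eventually_atTop.mpr ⟨N, fun n hn => ?_⟩
      simp only [hA, max_eq_left hn, max_eq_left (le_trans hn (Nat.le_succ n))]
      exact (hN n hn).2
    · refine hmem.2.2.2.congr' ?_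
      refine eventually_atTop.mpr ⟨N, fun n hn => ?_⟩
      simp [hA, hB, max_eq_left hn]
  have hApos : ∀ n, 0 < A n := fun n =>
    lt_of_lt_of_le (ht0 (max n N)) (hN (max n N) (le_max_right _ _)).1.1
  refine ⟨A, B, hMemIE, asymp_of_eventually ht0 hApos (c₁ := 1/2) (c₂ := r + 1)
    (by norm_num) hr1 ?_⟩
  refine eventually_atTop.mpr ⟨N, fun n hn => ?_⟩
  have h1 := hN n hn
  constructor
  · simp only [hA, max_eq_left hn]
    nlinarith [ht0 n, h1.1.1]
  · simp only [hA, max_eq_left hn]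
    exact h1.1.2

/-- Proposition 2.10. -/
theorem stmt18 (E : Set ℝ) (hE : E ⊆ Ici 0) (τ : ℕ → ℝ) (hτ : MemE0d E τ) :
    (TauStronglyPorous E τ ↔ Ctau E τ < ⊤) ∧ (CSP E ↔ Ctot E < ⊤) := by
  constructor
  · constructor
    · rintro ⟨a, b, hmem, c₁, c₂, hc₁, hc₂, hby⟩
      have := lemA E hE τ hτ a b hmem.1 c₁ c₂ hc₁ hc₂ (Eventually.of_forall hby) hmem.2.2.2
      exact lt_of_le_of_lt this ENNReal.ofReal_lt_top
    · exact lemB E hE τ hτ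
  constructor
  · -- CSP → Ctot < ⊤
    intro hCSP
    by_contra htop
    have hT' : Ctot E = ⊤ := top_le_iff.mp (not_lt.mp htop)
    have H : ∀ k : ℕ, ∃ t, MemE0d E t ∧ (k : ℝ≥0∞) < Ctau E t := by
      intro k
      have hk : (k : ℝ≥0∞) < Ctot E := by
        rw [hT']; exact ENNReal.natCast_lt_top k
      rw [Ctot] at hk
      obtain ⟨t, ht⟩ := lt_iSup_iff.mp hk
      obtain ⟨htmem, hlt⟩ := lt_iSup_iff.mp ht
      exact ⟨t, htmem, hlt⟩
    choose T hT1 hT2 using H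
    have H2 : ∀ k : ℕ, ∃ N : ℕ, ∀ n, N ≤ n →
        T k (n + 1) ≤ T k n ∧ T k n < 1 / (k + 1 : ℝ) := by
      intro k
      have h2 : ∀ᶠ n in atTop, T k n < 1 / (k + 1 : ℝ) :=
        (hT1 k).2.2.eventually_lt_const (by positivity)
      exact eventually_atTop.mp ((hT1 k).1.and h2)
    choose N hN using H2
    set σ : ℕ → ℕ → ℝ := fun k n => T k (n + N k) with hσdef
    set e : ℕ ≃ ℕ × ℕ := (Denumerable.eqv (ℕ × ℕ)).symm with he
    set g : ℕ → ℝ := fun i => σ (e i).1 (e i).2 with hgdef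
    have hTpos : ∀ k n, 0 < T k n := fun k => memE0d_pos hE (hT1 k)
    have hg0 : ∀ i, 0 < g i := fun i => hTpos _ _
    have hσsmall : ∀ k n, σ k n < 1 / (k + 1 : ℝ) := fun k n =>
      (hN k (n + N k) (Nat.le_add_left _ _)).2
    have hfin : ∀ ε : ℝ, 0 < ε → {i | ε ≤ g i}.Finite := by
      intro ε hε
      obtain ⟨K, hK⟩ := exists_nat_gt (1 / ε)
      have hk_small : ∀ k, K ≤ k → ∀ n, σ k n < ε := by
        intro k hk n
        have h1 : σ k n < 1 / (k + 1 : ℝ) := hσsmall k n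
        have hKpos : (0:ℝ) < K := lt_of_le_of_lt (by positivity) hK
        have h2 : (1:ℝ) / (k + 1) < ε := by
          rw [div_lt_iff₀ (by positivity)]
          rw [div_lt_iff₀ hε] at hK
          have : (K:ℝ) ≤ k := Nat.cast_le.mpr hk
          nlinarith
        linarith
      have hFk : ∀ k, {n | ε ≤ σ k n}.Finite := by
        intro k
        have htd : Tendsto (σ k) atTop (𝓝 0) := by
          exact (hT1 k).2.2.comp (tendsto_add_atTop_nat (N k))
        have h2 : ∀ᶠ n in atTop, σ k n < ε := htd.eventually_lt_const hε
        rw [← Nat.cofinite_eq_atTop] at h2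
        exact (Filter.eventually_cofinite.mp h2).subset (fun n hn => not_lt.mpr hn)
      have hU : (⋃ k ∈ Finset.range K, ({k} : Set ℕ) ×ˢ {n | ε ≤ σ k n}).Finite :=
        Set.Finite.biUnion (Finset.range K).finite_toSet
          (fun k _ => (Set.finite_singleton k).prod (hFk k))
      refine (hU.preimage (e.injective.injOn)).subset ?_
      intro i hi
      simp only [Set.mem_preimage, Set.mem_iUnion]
      refine ⟨(e i).1, ?_, ?_⟩
      · simp only [Finset.mem_coe, Finset.mem_range]
        by_contra h
        push_neg at h
        exact absurd hi (not_le.mpr (hk_small _ h _))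
      · exact ⟨rfl, hi⟩
    obtain ⟨π, hπinj, hπsurj, hπmono⟩ := exists_sorted g hg0 hfin
    set τ' : ℕ → ℝ := fun m => g (π m) with hτ'def
    have hτ'mem : MemE0d E τ' := by
      refine ⟨Eventually.of_forall (fun n => hπmono n), fun n => (hT1 _).2.1 _, ?_⟩
      refine tendsto_order.mpr ⟨fun x hx => Eventually.of_forall fun m => lt_trans hx (hg0 _), ?_⟩
      intro x hx
      have hfin' : (π ⁻¹' {i | x ≤ g i}).Finite := (hfin x hx).preimage hπinj.injOn
      rw [← Nat.cofinite_eq_atTop]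
      filter_upwards [hfin'.eventually_cofinite_notMem] with m hm
      exact not_le.mp (by simpa using hm)
    obtain ⟨a, b, hmemIE, c₁, c₂, hc₁, hc₂, hbnd⟩ := hCSP τ' hτ'mem
    obtain ⟨k, hk⟩ := exists_nat_gt c₂
    choose ι hι using fun n : ℕ => hπsurj (e.symm (k, n))
    have hιinj : Function.Injective ι := by
      intro n n' h
      have h2 : e.symm (k, n) = e.symm (k, n') := by rw [← hι n, ← hι n', h]
      have := e.symm.injective h2
      exact (Prod.mk.injEq _ _ _ _ ▸ this).2
    have hτι : ∀ n, τ' (ι n) = σ k n := by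
      intro n
      show g (π (ι n)) = σ k n
      rw [hι n]
      show σ (e (e.symm (k, n))).1 (e (e.symm (k, n))).2 = σ k n
      rw [Equiv.apply_symm_apply]
    set m' : ℕ → ℕ := fun n => ι (n - N k) with hm'def
    have hbounds : ∀ᶠ n in atTop, c₁ * T k n < a (m' n) ∧ a (m' n) < c₂ * T k n := by
      refine eventually_atTop.mpr ⟨N k, fun n hn => ?_⟩
      have h1 := hbnd (m' n)
      have h2 : τ' (m' n) = T k n := by
        show τ' (ι (n - N k)) = T k n
        rw [hτι]
        show T k (n - N k + N k) = T k n
        rw [Nat.sub_add_cancel hn]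
      rw [h2] at h1
      exact h1
    have hm'tendsto : Tendsto m' atTop atTop := by
      have h1 : Tendsto ι atTop atTop := by
        rw [← Nat.cofinite_eq_atTop]
        exact hιinj.tendsto_cofinite
      exact h1.comp (tendsto_sub_atTop_nat (N k))
    have hratio : Tendsto (fun n => (b (m' n) - a (m' n)) / b (m' n)) atTop (𝓝 1) :=
      hmemIE.2.2.2.comp hm'tendsto
    have hfinal := lemA E hE (T k) (hT1 k) (fun n => a (m' n)) (fun n => b (m' n))
      (fun n => hmemIE.1 (m' n)) c₁ c₂ hc₁ hc₂ hbounds hratio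
    have hcon : (k : ℝ≥0∞) < (k : ℝ≥0∞) := by
      calc (k : ℝ≥0∞) < Ctau E (T k) := hT2 k
        _ ≤ ENNReal.ofReal c₂ := hfinal
        _ ≤ ENNReal.ofReal k := ENNReal.ofReal_le_ofReal hk.le
        _ = (k : ℝ≥0∞) := ENNReal.ofReal_natCast k
    exact lt_irrefl _ hcon
  · intro hfin' t ht
    apply lemB E hE t ht
    refine lt_of_le_of_lt ?_ hfin'
    exact le_biSup (fun t => Ctau E t) ht
end

section
/- Let E ⊆ [0,∞) be completely strongly porous at 0. If L̃ ∈ Ĩ_Eᵈ is universal, then M(L̃) = C_E. -/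
open Filter Topology Set
open scoped ENNReal

lemma gap_pos {E : Set ℝ} {a b : ℝ} (h : IsGapComponent E a b) : 0 < b :=
  lt_of_le_of_lt h.1 h.2.1

lemma gap_mem_ge {E : Set ℝ} {a b e : ℝ} (h : IsGapComponent E a b) (he : e ∈ E)
    (hlt : a < e) : b ≤ e := by
  by_contra hb
  push_neg at hb
  have hx : e ∈ Ioo a b ∩ E := ⟨⟨hlt, hb⟩, he⟩
  rw [h.2.2.1] at hx
  exact hx

lemma gap_right_acc {E : Set ℝ} {a b : ℝ} (h : IsGapComponent E a b) {ε : ℝ} (hε : 0 < ε) :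
    ∃ e, e ∈ E ∧ b ≤ e ∧ e < b + ε := by
  by_contra hcon
  push_neg at hcon
  have hfree : Ioo a (b + ε) ∩ E = ∅ := by
    rw [Set.eq_empty_iff_forall_notMem]
    rintro x ⟨⟨hx1, hx2⟩, hxE⟩
    rcases lt_or_ge x b with hxb | hxb
    · have hx : x ∈ Ioo a b ∩ E := ⟨⟨hx1, hxb⟩, hxE⟩
      rw [h.2.2.1] at hx
      exact hx
    · exact absurd hx2 (not_lt.2 (hcon x hxE hxb))
  have := (h.2.2.2 a (b + ε) h.1 le_rfl (by linarith) hfree).2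
  linarith

lemma gap_left_acc {E : Set ℝ} {a b : ℝ} (h : IsGapComponent E a b) {ε : ℝ} (hε : 0 < ε)
    (hεa : ε ≤ a) : ∃ e, e ∈ E ∧ a - ε < e ∧ e ≤ a := by
  by_contra hcon
  push_neg at hcon
  have hfree : Ioo (a - ε) b ∩ E = ∅ := by
    rw [Set.eq_empty_iff_forall_notMem]
    rintro x ⟨⟨hx1, hx2⟩, hxE⟩
    rcases le_or_gt x a with hxa | hxa
    · exact absurd hxa (not_le.2 (hcon x hxE hx1))
    · have hx : x ∈ Ioo a b ∩ E := ⟨⟨hxa, hx2⟩, hxE⟩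
      rw [h.2.2.1] at hx
      exact hx
  have := (h.2.2.2 (a - ε) b (by linarith) (by linarith) le_rfl hfree).1
  linarith

lemma gap_mono {E : Set ℝ} {a b a' b' : ℝ} (h : IsGapComponent E a b)
    (h' : IsGapComponent E a' b') (hle : a' ≤ a) : b' ≤ b := by
  by_contra hb
  push_neg at hb
  have := (h.2.2.2 a' b' h'.1 hle hb.le h'.2.2.1).2
  exact absurd this (ne_of_gt hb)

lemma limsup_comp_le (w : ℕ → ℝ≥0∞) (g : ℕ → ℕ) (hg : Tendsto g atTop atTop) :
    limsup (fun n => w (g n)) atTop ≤ limsup w atTop := by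
  refine le_of_forall_gt_imp_ge_of_dense fun c hc => ?_
  have h1 : ∀ᶠ j in atTop, w j < c := eventually_lt_of_limsup_lt hc
  exact limsup_le_of_le (by isBoundedDefault) ((hg.eventually h1).mono fun n h => h.le)

lemma limsup_le_of_eventually_mul {u w : ℕ → ℝ≥0∞}
    (h : ∀ δ : ℝ, 0 < δ → ∀ᶠ n in atTop, u n ≤ ENNReal.ofReal (1 + δ) * w n) :
    limsup u atTop ≤ limsup w atTop := by
  set C := limsup w atTop with hC
  have key : ∀ δ : ℝ, 0 < δ → limsup u atTop ≤ ENNReal.ofReal (1 + δ) * C := by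
    intro δ hδ
    calc limsup u atTop ≤ limsup (fun n => ENNReal.ofReal (1 + δ) * w n) atTop :=
          limsup_le_limsup (h δ hδ)
      _ = ENNReal.ofReal (1 + δ) * C := ENNReal.limsup_const_mul_of_ne_top ENNReal.ofReal_ne_top
  refine ENNReal.le_of_forall_pos_le_add fun ε hε hC' => ?_
  rcases eq_or_ne C 0 with h0 | h0
  · exact le_trans (key 1 one_pos) (by simp [h0])
  · set δ : ℝ := (ε : ℝ) / C.toReal with hδdef
    have hCt : 0 < C.toReal := ENNReal.toReal_pos h0 hC'.ne
    have hδ : 0 < δ := div_pos (by exact_mod_cast hε) hCt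
    refine (key δ hδ).trans ?_
    rw [ENNReal.ofReal_add zero_le_one hδ.le, ENNReal.ofReal_one, add_mul, one_mul]
    have heq : ENNReal.ofReal δ * C = (ε : ℝ≥0∞) := by
      rw [hδdef, ENNReal.ofReal_div_of_pos hCt, ENNReal.ofReal_coe_nnreal,
        ENNReal.ofReal_toReal hC'.ne, ENNReal.div_mul_cancel h0 hC'.ne]
    rw [heq]

noncomputable def tauSeq (p : ℕ → ℝ → ℝ) (mm : ℕ → ℝ) (N : ℕ) : ℕ → ℝ
  | 0 => p (N + 1) (mm (N + 1) / ((N + 1 : ℕ) : ℝ))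
  | (k + 1) => if mm (N + k + 2) < tauSeq p mm N k then
      p (N + k + 2) (min (mm (N + k + 2) / ((N + k + 2 : ℕ) : ℝ))
        (tauSeq p mm N k - mm (N + k + 2)))
    else tauSeq p mm N k


set_option maxHeartbeats 2000000 in
/-- Lemma 2.12, `M(L̃) = C_E` for universal `L̃`. -/
theorem stmt19 (E : Set ℝ) (hE : E ⊆ Ici 0) (hcsp : CSP E)
    (l m : ℕ → ℝ) (hlm : IsUniversal E l m) : Mlim l m = Ctot E := by
  obtain ⟨⟨hcomp, hldec, hl0, hratio⟩, huniv⟩ := hlm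
  have hmpos : ∀ n, 0 < m n := fun n => gap_pos (hcomp n)
  have hlnonneg : ∀ n, 0 ≤ l n := fun n => (hcomp n).1
  have hlltm : ∀ n, l n < m n := fun n => (hcomp n).2.1
  obtain ⟨N₀, hN₀⟩ := eventually_atTop.1 hldec
  have hmono : ∀ i j, N₀ ≤ i → i ≤ j → l j ≤ l i := by
    intro i j hi hij
    induction j, hij using Nat.le_induction with
    | base => exact le_rfl
    | succ k hk ih => exact (hN₀ k (le_trans hi hk)).trans ih
  have hlm0 : Tendsto (fun n => l n / m n) atTop (𝓝 0) := by
    have h1 : ∀ n : ℕ, 1 - (m n - l n) / m n = l n / m n := by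
      intro n
      rw [sub_div, div_self (hmpos n).ne']
      ring
    have h2 : Tendsto (fun n => 1 - (m n - l n) / m n) atTop (𝓝 (1 - 1)) :=
      tendsto_const_nhds.sub hratio
    rw [sub_self] at h2
    exact h2.congr h1
  by_cases hB : ∀ ε : ℝ, 0 < ε → (E ∩ Ioo 0 ε).Nonempty
  · -- Case B : E accumulates at 0 from the right
    have hlpos : ∀ n, 0 < l n := by
      intro n
      rcases (hlnonneg n).lt_or_eq with h | h
      · exact h
      · exfalso
        obtain ⟨e, heE, he0, hem⟩ := hB (m n) (hmpos n)
        have hx : e ∈ Ioo (l n) (m n) ∩ E := ⟨⟨h ▸ he0, hem⟩, heE⟩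
        rw [(hcomp n).2.2.1] at hx
        exact hx
    have hmmono : ∀ n, N₀ ≤ n → m (n + 1) ≤ m n := fun n hn =>
      gap_mono (hcomp n) (hcomp (n + 1)) (hN₀ n hn)
    have hm0 : Tendsto m atTop (𝓝 0) := by
      rw [Metric.tendsto_atTop]
      intro ε hε
      obtain ⟨e, heE, he0, heε⟩ := hB ε hε
      obtain ⟨N, hN⟩ := eventually_atTop.1 (hl0.eventually_lt_const he0)
      refine ⟨N, fun n hn => ?_⟩
      have h1 : m n ≤ e := gap_mem_ge (hcomp n) heE (hN n hn)
      rw [Real.dist_eq, sub_zero, abs_of_pos (hmpos n)]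
      linarith
    obtain ⟨δ₀, hδ₀pos, hδ₀⟩ : ∃ δ : ℝ, 0 < δ ∧ ∀ k < N₀, δ ≤ l k := by
      rcases Nat.eq_zero_or_pos N₀ with h | h
      · exact ⟨1, one_pos, fun k hk => absurd hk (by omega)⟩
      · obtain ⟨k₀, _, hmin⟩ := Finset.exists_min_image (Finset.range N₀) l
          ⟨0, Finset.mem_range.2 h⟩
        exact ⟨l k₀, hlpos k₀, fun k hk => hmin k (Finset.mem_range.2 hk)⟩
    obtain ⟨N₂', hN₂'⟩ := eventually_atTop.1 (hl0.eventually_lt_const hδ₀pos)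
    set N₂ := max (max N₂' N₀) 1 with hN₂def
    have hN₂N₀ : N₀ ≤ N₂ := le_trans (le_max_right _ _) (le_max_left _ _)
    have hL5 : ∀ n, N₂ ≤ n → ∀ k, l (n + 1) < l k → l n ≤ l k := by
      intro n hn k hk
      rcases lt_or_ge k N₀ with hkN | hkN
      · exact le_of_lt (lt_of_lt_of_le
          (hN₂' n (le_trans (le_trans (le_max_left _ _) (le_max_left _ _)) hn)) (hδ₀ k hkN))
      · rcases le_or_gt k n with h | h
        · exact hmono k n hkN h
        · exact absurd hk (not_lt.2 (hmono (n + 1) k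
            (le_trans hN₂N₀ (le_trans hn (Nat.le_succ n))) h))
    -- the pick function for points of E just right of the m j
    have hacc' : ∀ j : ℕ, ∀ ε : ℝ, ∃ e : ℝ, 0 < ε → (e ∈ E ∧ m j ≤ e ∧ e < m j + ε) := by
      intro j ε
      by_cases h : 0 < ε
      · obtain ⟨e, he⟩ := gap_right_acc (hcomp j) h
        exact ⟨e, fun _ => he⟩
      · exact ⟨0, fun h' => absurd h' h⟩
    choose pick hpick using hacc'
    set σ : ℕ → ℝ := tauSeq pick m N₂ with hσdef
    have hσ0 : σ 0 = pick (N₂ + 1) (m (N₂ + 1) / ((N₂ + 1 : ℕ) : ℝ)) := rfl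
    have hσs : ∀ k, σ (k + 1) = if m (N₂ + k + 2) < σ k then
        pick (N₂ + k + 2) (min (m (N₂ + k + 2) / ((N₂ + k + 2 : ℕ) : ℝ))
          (σ k - m (N₂ + k + 2)))
      else σ k := fun k => rfl
    have hcastpos : ∀ j : ℕ, (0 : ℝ) < ((j + 1 : ℕ) : ℝ) := by
      intro j
      exact_mod_cast Nat.succ_pos j
    have hσinv : ∀ k, σ k ∈ E ∧ m (N₂ + k + 1) ≤ σ k ∧
        σ k ≤ m (N₂ + k + 1) + m (N₂ + k + 1) / ((N₂ + k + 1 : ℕ) : ℝ) := by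
      intro k
      induction k with
      | zero =>
        have hp := hpick (N₂ + 1) (m (N₂ + 1) / ((N₂ + 1 : ℕ) : ℝ))
          (div_pos (hmpos _) (hcastpos N₂))
        rw [hσ0]
        exact ⟨hp.1, hp.2.1, hp.2.2.le⟩
      | succ k ih =>
        obtain ⟨ihE, ihl, ihu⟩ := ih
        have harith : N₂ + (k + 1) + 1 = N₂ + k + 2 := by omega
        rw [hσs k, harith]
        by_cases h : m (N₂ + k + 2) < σ k
        · rw [if_pos h]
          have hεpos : 0 < min (m (N₂ + k + 2) / ((N₂ + k + 2 : ℕ) : ℝ))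
              (σ k - m (N₂ + k + 2)) :=
            lt_min (div_pos (hmpos _) (by rw [show N₂ + k + 2 = (N₂ + k + 1) + 1 from rfl]; exact hcastpos _)) (sub_pos.2 h)
          have hp := hpick (N₂ + k + 2) _ hεpos
          refine ⟨hp.1, hp.2.1, ?_⟩
          have := hp.2.2
          have hminle : min (m (N₂ + k + 2) / ((N₂ + k + 2 : ℕ) : ℝ))
              (σ k - m (N₂ + k + 2)) ≤ m (N₂ + k + 2) / ((N₂ + k + 2 : ℕ) : ℝ) :=
            min_le_left _ _
          linarith
        · rw [if_neg h]
          have hstep : m (N₂ + k + 2) ≤ m (N₂ + k + 1) :=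
            hmmono (N₂ + k + 1) (by omega)
          push_neg at h
          refine ⟨ihE, le_trans hstep ihl, ?_⟩
          have hpos : 0 ≤ m (N₂ + k + 2) / ((N₂ + k + 2 : ℕ) : ℝ) :=
            le_of_lt (div_pos (hmpos _)
              (by rw [show N₂ + k + 2 = (N₂ + k + 1) + 1 from rfl]; exact hcastpos _))
          linarith
    have hσdec : ∀ k, σ (k + 1) ≤ σ k := by
      intro k
      rw [hσs k]
      by_cases h : m (N₂ + k + 2) < σ k
      · rw [if_pos h]
        have hεpos : 0 < min (m (N₂ + k + 2) / ((N₂ + k + 2 : ℕ) : ℝ))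
            (σ k - m (N₂ + k + 2)) :=
          lt_min (div_pos (hmpos _) (by rw [show N₂ + k + 2 = (N₂ + k + 1) + 1 from rfl]; exact hcastpos _)) (sub_pos.2 h)
        have hp := hpick (N₂ + k + 2) _ hεpos
        have hminle : min (m (N₂ + k + 2) / ((N₂ + k + 2 : ℕ) : ℝ))
            (σ k - m (N₂ + k + 2)) ≤ σ k - m (N₂ + k + 2) := min_le_right _ _
        have := hp.2.2
        linarith
      · rw [if_neg h]
    set τ : ℕ → ℝ := fun n => σ (n - N₂) with hτdef
    have hτE : ∀ n, τ n ∈ E := fun n => (hσinv _).1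
    have hτlow : ∀ n, N₂ ≤ n → m (n + 1) ≤ τ n := by
      intro n hn
      have hk : N₂ + (n - N₂) + 1 = n + 1 := by omega
      have h := (hσinv (n - N₂)).2.1
      rwa [hk] at h
    have hτup : ∀ n, N₂ ≤ n →
        τ n ≤ m (n + 1) + m (n + 1) / ((n + 1 : ℕ) : ℝ) := by
      intro n hn
      have hk : N₂ + (n - N₂) + 1 = n + 1 := by omega
      have h := (hσinv (n - N₂)).2.2
      rwa [hk] at h
    have hτpos : ∀ n, 0 < τ n :=
      fun n => lt_of_lt_of_le (hmpos _) (hσinv (n - N₂)).2.1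
    have hτdec2 : ∀ n, N₂ ≤ n → τ (n + 1) ≤ τ n := by
      intro n hn
      have hk : n + 1 - N₂ = (n - N₂) + 1 := by omega
      show σ (n + 1 - N₂) ≤ σ (n - N₂)
      rw [hk]
      exact hσdec _
    have hτ0 : Tendsto τ atTop (𝓝 0) := by
      have hupper : Tendsto (fun n : ℕ => 2 * m (n + 1)) atTop (𝓝 0) := by
        have h1 : Tendsto (fun n : ℕ => m (n + 1)) atTop (𝓝 0) :=
          hm0.comp (tendsto_add_atTop_nat 1)
        simpa using h1.const_mul (2 : ℝ)
      refine tendsto_of_tendsto_of_tendsto_of_le_of_le' tendsto_const_nhds hupper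
        (Eventually.of_forall fun n => (hτpos n).le) ?_
      filter_upwards [eventually_ge_atTop N₂] with n hn
      have h1 := hτup n hn
      have h2 : m (n + 1) / ((n + 1 : ℕ) : ℝ) ≤ m (n + 1) := by
        apply div_le_self (hmpos _).le
        exact_mod_cast Nat.succ_le_succ (Nat.zero_le n)
      linarith
    have hτmemE0d : MemE0d E τ :=
      ⟨eventually_atTop.2 ⟨N₂, hτdec2⟩,
        fun n => ⟨hτE n, by simp [(hτpos n).ne']⟩, hτ0⟩
    -- Direction 1 : Mlim ≤ Ctau E τ
    have hMC : Mlim l m ≤ Ctau E τ := by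
      refine le_sInf fun c hc => ?_
      obtain ⟨a, b, hab, hta, rfl⟩ := hc
      obtain ⟨N₁, f, hf⟩ := huniv a b hab
      have key : ∀ d : ℝ, 0 < d → ∀ᶠ n in atTop,
          ENNReal.ofReal (l n / m (n + 1)) ≤
            ENNReal.ofReal (1 + d) * ENNReal.ofReal (a n / τ n) := by
        intro d hd
        obtain ⟨Nd, hNd⟩ := exists_nat_gt (1 / d)
        filter_upwards [hta, eventually_ge_atTop N₁, eventually_ge_atTop N₂,
          eventually_ge_atTop Nd] with n h1 h2 h3 h4
        have ha_eq : a n = l (f n) := hf n h2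
        have hτl : m (n + 1) ≤ τ n := hτlow n h3
        have hfl : l (n + 1) < l (f n) := by
          rw [← ha_eq]
          calc l (n + 1) < m (n + 1) := hlltm (n + 1)
            _ ≤ τ n := hτl
            _ ≤ a n := h1
        have haln : l n ≤ a n := by
          rw [ha_eq]
          exact hL5 n h3 (f n) hfl
        have hτub : τ n ≤ (1 + d) * m (n + 1) := by
          have hu := hτup n h3
          have hcast : (1 : ℝ) ≤ ((n + 1 : ℕ) : ℝ) * d := by
            rw [← div_le_iff₀ hd]
            have hc2 : (Nd : ℝ) ≤ ((n + 1 : ℕ) : ℝ) := by exact_mod_cast Nat.le_succ_of_le h4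
            linarith
          have h5 : m (n + 1) / ((n + 1 : ℕ) : ℝ) ≤ d * m (n + 1) := by
            rw [div_le_iff₀ (hcastpos n)]
            nlinarith [mul_le_mul_of_nonneg_left hcast (hmpos (n + 1)).le]
          nlinarith [hmpos (n + 1)]
        have hreal : l n / m (n + 1) ≤ (1 + d) * (a n / τ n) := by
          have h6 : l n / m (n + 1) ≤ a n / m (n + 1) :=
            (div_le_div_iff_of_pos_right (hmpos (n + 1))).2 haln
          refine h6.trans ?_
          rw [← mul_div_assoc, div_le_div_iff₀ (hmpos (n + 1)) (hτpos n)]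
          have hanonneg : 0 ≤ a n := le_trans (hlnonneg n) haln
          calc a n * τ n ≤ a n * ((1 + d) * m (n + 1)) :=
                mul_le_mul_of_nonneg_left hτub hanonneg
            _ = (1 + d) * a n * m (n + 1) := by ring
        calc ENNReal.ofReal (l n / m (n + 1))
            ≤ ENNReal.ofReal ((1 + d) * (a n / τ n)) := ENNReal.ofReal_le_ofReal hreal
          _ = ENNReal.ofReal (1 + d) * ENNReal.ofReal (a n / τ n) :=
              ENNReal.ofReal_mul (by linarith)
      exact limsup_le_of_eventually_mul key
    -- Direction 2 : Ctau E t ≤ Mlim for every t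
    have hdir2 : ∀ t : ℕ → ℝ, MemE0d E t → Ctau E t ≤ Mlim l m := by
      rintro t ⟨htdec, htmem, ht0⟩
      have htpos : ∀ n, 0 < t n := by
        intro n
        have hne : t n ≠ 0 := by simpa using (htmem n).2
        exact (hE (htmem n).1).lt_of_ne' hne
      obtain ⟨Nτ, hNτ⟩ := eventually_atTop.1 htdec
      obtain ⟨N₅, hN₅⟩ := eventually_atTop.1 (ht0.eventually_lt_const (hlpos N₀))
      set N₄ := max Nτ N₅ with hN₄def
      set g : ℕ → ℕ := fun n => sSup {k | t n ≤ l k} with hgdef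
      have hTbdd : ∀ n, BddAbove {k | t n ≤ l k} := by
        intro n
        obtain ⟨K, hK⟩ := eventually_atTop.1 (hl0.eventually_lt_const (htpos n))
        refine ⟨K, fun k hk => ?_⟩
        by_contra hkK
        push_neg at hkK
        exact absurd hk (not_le.2 (hK k hkK.le))
      have hTmemN₀ : ∀ n, N₄ ≤ n → N₀ ∈ {k | t n ≤ l k} := fun n hn =>
        (hN₅ n (le_trans (le_max_right _ _) hn)).le
      have hgmem : ∀ n, N₄ ≤ n → t n ≤ l (g n) := fun n hn =>
        Nat.sSup_mem ⟨N₀, hTmemN₀ n hn⟩ (hTbdd n)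
      have hgN₀ : ∀ n, N₄ ≤ n → N₀ ≤ g n := fun n hn =>
        le_csSup (hTbdd n) (hTmemN₀ n hn)
      have hgsucc : ∀ n, N₄ ≤ n → l (g n + 1) < t n := by
        intro n hn
        by_contra hcon
        push_neg at hcon
        have : g n + 1 ≤ g n := le_csSup (hTbdd n) hcon
        omega
      have hgmono : ∀ n, N₄ ≤ n → g n ≤ g (n + 1) := by
        intro n hn
        refine csSup_le_csSup (hTbdd (n + 1)) ⟨N₀, hTmemN₀ n hn⟩ fun k hk => ?_
        exact le_trans (hNτ n (le_trans (le_max_left _ _) hn)) hk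
      set g' : ℕ → ℕ := fun n => if N₄ ≤ n then g n else N₀ with hg'def
      have hg'eq : ∀ n, N₄ ≤ n → g' n = g n := fun n hn => if_pos hn
      have hg'top : Tendsto g' atTop atTop := by
        rw [tendsto_atTop]
        intro K
        obtain ⟨N₆, hN₆⟩ := eventually_atTop.1
          (ht0.eventually_lt_const (hlpos (max K N₀)))
        filter_upwards [eventually_ge_atTop N₄, eventually_ge_atTop N₆] with n h1 h2
        have hmem : max K N₀ ∈ {k | t n ≤ l k} := (hN₆ n h2).le
        have h3 : max K N₀ ≤ g n := le_csSup (hTbdd n) hmem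
        rw [hg'eq n h1]
        exact le_trans (le_max_left _ _) h3
      have hgN₀' : ∀ n, N₀ ≤ g' n := by
        intro n
        by_cases hn : N₄ ≤ n
        · rw [hg'eq n hn]; exact hgN₀ n hn
        · show (if N₄ ≤ n then g n else N₀) ≥ N₀
          rw [if_neg hn]
      have hIE : MemIE E (fun n => l (g' n)) (fun n => m (g' n)) := by
        refine ⟨fun n => hcomp _, ?_, hl0.comp hg'top, ?_⟩
        · filter_upwards [eventually_ge_atTop N₄] with n hn
          have h2 : g' (n + 1) = g (n + 1) := hg'eq (n + 1) (le_trans hn (Nat.le_succ n))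
          show l (g' (n + 1)) ≤ l (g' n)
          rw [hg'eq n hn, h2]
          exact hmono (g n) (g (n + 1)) (hgN₀ n hn) (hgmono n hn)
        · have h3 : Tendsto (fun n => l (g' n) / m (g' n)) atTop (𝓝 0) := hlm0.comp hg'top
          have h4 : Tendsto (fun n => 1 - l (g' n) / m (g' n)) atTop (𝓝 (1 - 0)) :=
            tendsto_const_nhds.sub h3
          rw [sub_zero] at h4
          refine h4.congr fun n => ?_
          rw [sub_div, div_self (hmpos (g' n)).ne']
      have hev : ∀ᶠ n in atTop, t n ≤ l (g' n) := by
        filter_upwards [eventually_ge_atTop N₄] with n hn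
        rw [hg'eq n hn]
        exact hgmem n hn
      have hCle : Ctau E t ≤ limsup (fun n => ENNReal.ofReal (l (g' n) / t n)) atTop :=
        sInf_le ⟨_, _, hIE, hev, rfl⟩
      refine le_trans hCle ?_
      have hstep : ∀ᶠ n in atTop, ENNReal.ofReal (l (g' n) / t n) ≤
          ENNReal.ofReal (l (g' n) / m (g' n + 1)) := by
        filter_upwards [eventually_ge_atTop N₄] with n hn
        apply ENNReal.ofReal_le_ofReal
        rw [hg'eq n hn]
        have hm1 : m (g n + 1) ≤ t n :=
          gap_mem_ge (hcomp (g n + 1)) (htmem n).1 (hgsucc n hn)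
        exact div_le_div_of_nonneg_left (hlnonneg _) (hmpos _) hm1
      have hc1 : limsup (fun n => ENNReal.ofReal (l (g' n) / t n)) atTop ≤
          limsup (fun n => ENNReal.ofReal (l (g' n) / m (g' n + 1))) atTop :=
        limsup_le_limsup hstep
      have hc2 : limsup (fun n => ENNReal.ofReal (l (g' n) / m (g' n + 1))) atTop ≤
          limsup (fun j => ENNReal.ofReal (l j / m (j + 1))) atTop :=
        limsup_comp_le (fun j => ENNReal.ofReal (l j / m (j + 1))) g' hg'top
      exact le_trans hc1 hc2
    have hCtoteq : Ctot E = ⨆ t ∈ {t : ℕ → ℝ | MemE0d E t}, Ctau E t := rfl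
    apply le_antisymm
    · calc Mlim l m ≤ Ctau E τ := hMC
        _ ≤ Ctot E := by
            rw [hCtoteq]
            exact le_biSup (fun t => Ctau E t) hτmemE0d
    · rw [hCtoteq]
      exact iSup₂_le fun t ht => hdir2 t ht
  · -- Case A : E has no points near 0
    push_neg at hB
    obtain ⟨ε, hε, hEε⟩ := hB
    have hMlim : Mlim l m = 0 := by
      have hev : ∀ᶠ n in atTop, ENNReal.ofReal (l n / m (n + 1)) = 0 := by
        filter_upwards [hl0.eventually_lt_const hε] with n hn
        have hl0n : l n = 0 := by
          rcases (hlnonneg n).lt_or_eq with hpos | h0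
          · exfalso
            obtain ⟨e, heE, he1, he2⟩ := gap_left_acc (hcomp n) (half_pos hpos) (half_le_self hpos.le)
            have : e ∈ E ∩ Ioo 0 ε := ⟨heE, by constructor <;> linarith⟩
            rw [hEε] at this
            exact this
          · exact h0.symm
        simp [hl0n]
      calc Mlim l m = limsup (fun _ : ℕ => (0 : ℝ≥0∞)) atTop := limsup_congr hev
        _ = 0 := limsup_const 0
    have hS : {t : ℕ → ℝ | MemE0d E t} = ∅ := by
      rw [Set.eq_empty_iff_forall_notMem]
      rintro τ ⟨hτdec, hτmem, hτ0⟩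
      obtain ⟨n, hn⟩ := (hτ0.eventually_lt_const hε).exists
      have hτpos : 0 < τ n := lt_of_le_of_ne (hE (hτmem n).1) (Ne.symm (hτmem n).2)
      have : τ n ∈ E ∩ Ioo 0 ε := ⟨(hτmem n).1, hτpos, hn⟩
      rw [hEε] at this
      exact this
    rw [hMlim, Ctot, hS]
    simp
end
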